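/- Let F, F^k : ℝ^d → ℝ be μ-smooth (gradients μ-Lipschitz) functions with ‖∇F(w)‖ ≤ L for all w, and suppose random vectors v_k satisfy E‖w − v_k‖ ≤ δ_k. If ∇F(w) = Σ_{k=1}^Q p_k ∇F^k(w) with p_k ≥ 0, Σ p_k = 1, then ∇F(w)ᵀ(Σ_k p_k E[∇F^k(v_k)]) ≥ ‖∇F(w)‖² − L·μ·Σ_k p_k δ_k. -/

import Mathlib

open MeasureTheory

theorem gradient_inner_product_bias_bound {Ω : Type*} [MeasurableSpace Ω]
    (μprob : Measure Ω) [IsProbabilityMeasure μprob] (d Q : ℕ)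
    (F : EuclideanSpace ℝ (Fin d) → ℝ) (Fk : Fin Q → EuclideanSpace ℝ (Fin d) → ℝ)
    (μ L : ℝ) (hμ : 0 < μ) (hL : 0 ≤ L)
    (hFsmooth : ∀ x y, ‖gradient F x - gradient F y‖ ≤ μ * ‖x - y‖)
    (hFksmooth : ∀ k, ∀ x y, ‖gradient (Fk k) x - gradient (Fk k) y‖ ≤ μ * ‖x - y‖)
    (hFbdd : ∀ x, ‖gradient F x‖ ≤ L)
    (p : Fin Q → ℝ) (hp : ∀ k, 0 ≤ p k) (hpsum : ∑ k, p k = 1)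
    (hdecomp : ∀ x, gradient F x = ∑ k, p k • gradient (Fk k) x)
    (w : EuclideanSpace ℝ (Fin d)) (v : Fin Q → Ω → EuclideanSpace ℝ (Fin d))
    (δ : Fin Q → ℝ)
    (hvint : ∀ k, Integrable (fun ω => gradient (Fk k) (v k ω)) μprob)
    (hdint : ∀ k, Integrable (fun ω => ‖w - v k ω‖) μprob)
    (hdrift : ∀ k, (∫ ω, ‖w - v k ω‖ ∂μprob) ≤ δ k) :
    (inner ℝ (gradient F w) (∑ k, p k • ∫ ω, gradient (Fk k) (v k ω) ∂μprob) : ℝ) ≥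
      ‖gradient F w‖ ^ 2 - L * μ * ∑ k, p k * δ k := by
  set g := gradient F w with hg
  have key : (inner ℝ g (∑ k, p k • ∫ ω, gradient (Fk k) (v k ω) ∂μprob) : ℝ)
      = ‖g‖ ^ 2 + ∑ k, p k * (inner ℝ g ((∫ ω, gradient (Fk k) (v k ω) ∂μprob) - gradient (Fk k) w) : ℝ) := by
    have : (∑ k, p k • ∫ ω, gradient (Fk k) (v k ω) ∂μprob)
        = g + ∑ k, p k • ((∫ ω, gradient (Fk k) (v k ω) ∂μprob) - gradient (Fk k) w) := by
      rw [hg, hdecomp w]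
      rw [← Finset.sum_add_distrib]
      refine Finset.sum_congr rfl fun k _ => ?_
      rw [smul_sub]; abel
    rw [this, inner_add_right, real_inner_self_eq_norm_sq, inner_sum]
    congr 1
    exact Finset.sum_congr rfl fun k _ => real_inner_smul_right ..
  rw [key]
  have hbound : ∀ k, |(inner ℝ g ((∫ ω, gradient (Fk k) (v k ω) ∂μprob) - gradient (Fk k) w) : ℝ)| ≤ L * (μ * δ k) := by
    intro k
    have h1 : ‖(∫ ω, gradient (Fk k) (v k ω) ∂μprob) - gradient (Fk k) w‖ ≤ μ * δ k := by
      have : (∫ ω, gradient (Fk k) (v k ω) ∂μprob) - gradient (Fk k) w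
          = ∫ ω, (gradient (Fk k) (v k ω) - gradient (Fk k) w) ∂μprob := by
        rw [integral_sub (hvint k) (integrable_const _), integral_const, probReal_univ,
          one_smul]
      rw [this]
      calc ‖∫ ω, (gradient (Fk k) (v k ω) - gradient (Fk k) w) ∂μprob‖
          ≤ ∫ ω, ‖gradient (Fk k) (v k ω) - gradient (Fk k) w‖ ∂μprob :=
            norm_integral_le_integral_norm _
        _ ≤ ∫ ω, μ * ‖w - v k ω‖ ∂μprob := by
            apply integral_mono_of_nonneg
            · filter_upwards with ω; positivity
            · exact (hdint k).const_mul μ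
            · filter_upwards with ω
              have := hFksmooth k (v k ω) w
              rwa [norm_sub_rev w]
        _ = μ * ∫ ω, ‖w - v k ω‖ ∂μprob := integral_const_mul μ _
        _ ≤ μ * δ k := by
            exact mul_le_mul_of_nonneg_left (hdrift k) hμ.le
    calc |(inner ℝ g ((∫ ω, gradient (Fk k) (v k ω) ∂μprob) - gradient (Fk k) w) : ℝ)|
        ≤ ‖g‖ * ‖(∫ ω, gradient (Fk k) (v k ω) ∂μprob) - gradient (Fk k) w‖ :=
          abs_real_inner_le_norm _ _
      _ ≤ L * (μ * δ k) := by
          apply mul_le_mul (hFbdd w) h1 (norm_nonneg _) hL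
  have hsum : ∑ k, p k * (inner ℝ g ((∫ ω, gradient (Fk k) (v k ω) ∂μprob) - gradient (Fk k) w) : ℝ)
      ≥ -(L * μ * ∑ k, p k * δ k) := by
    rw [Finset.mul_sum, neg_eq_neg_one_mul, Finset.mul_sum]
    apply Finset.sum_le_sum
    intro k _
    have := (abs_le.mp (hbound k)).1
    have hpk := hp k
    nlinarith [mul_le_mul_of_nonneg_left this hpk]
  linarith
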